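/- For every integer t ≥ 2, the number of orbits of the scalar multiplication action of the unit group (ℤ/tℤ)ˣ on the set of primitive vectors (a,b,c,d) ∈ (ℤ/tℤ)⁴ satisfying either a = c = 0 or b = d = 0 equals 2t · ∏_{p prime, p ∣ t} (1 + p⁻¹). -/

import Mathlib

/-- A vector `v ∈ (ℤ/tℤ)⁴` is primitive if its components generate `ℤ/tℤ` as an ideal. -/
def IsPrimitiveVec {t : ℕ} (v : Fin 4 → ZMod t) : Prop :=
  Ideal.span (Set.range v) = ⊤

lemma isPrimitiveVec_iff {t : ℕ} (v : Fin 4 → ZMod t) :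
    IsPrimitiveVec v ↔ ∃ c : Fin 4 → ZMod t, ∑ i, c i * v i = 1 := by
  rw [IsPrimitiveVec, Ideal.eq_top_iff_one]
  rw [show Ideal.span (Set.range v) = Submodule.span (ZMod t) (Set.range v) from rfl]
  rw [Submodule.mem_span_range_iff_exists_fun]
  simp [smul_eq_mul]

noncomputable def cpairs (n : ℕ) : ℕ := Nat.card {x : ZMod n × ZMod n // IsCoprime x.1 x.2}

lemma isCoprime_prod_iff {R S : Type*} [CommSemiring R] [CommSemiring S] (a b : R × S) :
    IsCoprime a b ↔ IsCoprime a.1 b.1 ∧ IsCoprime a.2 b.2 := by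
  constructor
  · intro h
    exact ⟨h.map (RingHom.fst R S), h.map (RingHom.snd R S)⟩
  · rintro ⟨⟨u1, w1, h1⟩, ⟨u2, w2, h2⟩⟩
    exact ⟨(u1, u2), (w1, w2), by
      rw [Prod.ext_iff]; constructor <;> simp [h1, h2]⟩

lemma cpairs_mul {m n : ℕ} (h : m.Coprime n) : cpairs (m * n) = cpairs m * cpairs n := by
  let e := ZMod.chineseRemainder h
  have key : ∀ a b : ZMod (m * n), IsCoprime a b ↔ IsCoprime (e a) (e b) := by
    intro a b
    constructor
    · intro hc; exact hc.map e.toRingHom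
    · intro hc
      have := hc.map e.symm.toRingHom
      simpa using this
  have E : {x : ZMod (m * n) × ZMod (m * n) // IsCoprime x.1 x.2} ≃
      {x : ZMod m × ZMod m // IsCoprime x.1 x.2} ×
      {x : ZMod n × ZMod n // IsCoprime x.1 x.2} := by
    refine (Equiv.subtypeEquiv
      ((e.toEquiv.prodCongr e.toEquiv).trans
        (Equiv.prodProdProdComm (ZMod m) (ZMod n) (ZMod m) (ZMod n))) ?_).trans
      (Equiv.subtypeProdEquivProd
        (p := fun x : ZMod m × ZMod m => IsCoprime x.1 x.2)
        (q := fun x : ZMod n × ZMod n => IsCoprime x.1 x.2))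
    intro x
    rw [key x.1 x.2, isCoprime_prod_iff]
    rfl
  rw [cpairs, cpairs, cpairs, Nat.card_congr E, Nat.card_prod]

noncomputable def unitsEquivIsUnit {M : Type*} [Monoid M] : Mˣ ≃ {x : M // IsUnit x} where
  toFun u := ⟨u, u.isUnit⟩
  invFun x := x.2.unit
  left_inv u := Units.ext u.isUnit.unit_spec
  right_inv x := Subtype.ext x.2.unit_spec

lemma zmod_isUnit_iff_not_dvd {p k : ℕ} (hp : p.Prime) (hk : k ≠ 0) (c : ZMod (p ^ k)) :
    IsUnit c ↔ ¬ p ∣ c.val := by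
  haveI : NeZero (p ^ k) := ⟨pow_ne_zero _ hp.pos.ne'⟩
  conv_lhs => rw [← ZMod.natCast_zmod_val c]
  rw [ZMod.isUnit_iff_coprime, Nat.coprime_pow_right_iff (Nat.pos_of_ne_zero hk),
    Nat.coprime_comm, Nat.Prime.coprime_iff_not_dvd hp]

lemma zmod_pp_isCoprime_iff {p k : ℕ} (hp : p.Prime) (hk : k ≠ 0) (a b : ZMod (p ^ k)) :
    IsCoprime a b ↔ IsUnit a ∨ IsUnit b := by
  haveI : Fact p.Prime := ⟨hp⟩
  haveI : NeZero (p ^ k) := ⟨pow_ne_zero _ hp.pos.ne'⟩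
  constructor
  · rintro ⟨x, y, hxy⟩
    by_contra hcon
    push_neg at hcon
    obtain ⟨ha, hb⟩ := hcon
    rw [zmod_isUnit_iff_not_dvd hp hk, not_not] at ha hb
    let ψ : ZMod (p ^ k) →+* ZMod p := ZMod.castHom (dvd_pow_self p hk) (ZMod p)
    have hz : ∀ c : ZMod (p ^ k), p ∣ c.val → ψ c = 0 := by
      intro c hc
      have : ψ c = ((c.val : ℕ) : ZMod p) := by
        simp [ψ, ZMod.castHom_apply, ZMod.natCast_val]
      rw [this, ZMod.natCast_eq_zero_iff]
      exact hc
    have := congrArg ψ hxy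
    rw [map_add, map_mul, map_mul, map_one, hz a ha, hz b hb] at this
    simp at this
  · rintro (⟨u, rfl⟩ | ⟨u, rfl⟩)
    · exact ⟨(u⁻¹ : (ZMod (p ^ k))ˣ), 0, by simp⟩
    · exact ⟨0, (u⁻¹ : (ZMod (p ^ k))ˣ), by simp⟩

lemma card_nonunits_zmod_pp {p k : ℕ} (hp : p.Prime) (hk : k ≠ 0) :
    Nat.card {a : ZMod (p ^ k) // ¬ IsUnit a} = p ^ (k - 1) := by
  classical
  haveI : NeZero (p ^ k) := ⟨pow_ne_zero _ hp.pos.ne'⟩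
  rw [Nat.card_eq_fintype_card, Fintype.card_subtype_compl]
  have h1 : Fintype.card {a : ZMod (p ^ k) // IsUnit a} = Nat.totient (p ^ k) := by
    rw [← Fintype.card_congr unitsEquivIsUnit, ZMod.card_units_eq_totient]
  rw [h1, ZMod.card, Nat.totient_prime_pow hp (Nat.pos_of_ne_zero hk)]
  have h2 : p ^ (k - 1) * (p - 1) + p ^ (k - 1) = p ^ k := by
    have hp1 : p - 1 + 1 = p := Nat.sub_add_cancel hp.one_lt.le
    calc p ^ (k - 1) * (p - 1) + p ^ (k - 1) = p ^ (k - 1) * (p - 1 + 1) := by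
          rw [Nat.mul_add, Nat.mul_one]
      _ = p ^ (k - 1) * p := by rw [hp1]
      _ = p ^ k := by rw [← pow_succ]; congr 1; omega
  omega

lemma cpairs_prime_pow {p k : ℕ} (hp : p.Prime) (hk : k ≠ 0) :
    cpairs (p ^ k) + (p ^ (k - 1)) ^ 2 = (p ^ k) ^ 2 := by
  classical
  haveI : NeZero (p ^ k) := ⟨pow_ne_zero _ hp.pos.ne'⟩
  have e1 : {x : ZMod (p ^ k) × ZMod (p ^ k) // IsCoprime x.1 x.2} ≃
      {x : ZMod (p ^ k) × ZMod (p ^ k) // ¬ (¬ IsUnit x.1 ∧ ¬ IsUnit x.2)} :=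
    Equiv.subtypeEquivRight fun x => by
      rw [zmod_pp_isCoprime_iff hp hk]; tauto
  have e2 : {x : ZMod (p ^ k) × ZMod (p ^ k) // ¬ IsUnit x.1 ∧ ¬ IsUnit x.2} ≃
      {a : ZMod (p ^ k) // ¬ IsUnit a} × {a : ZMod (p ^ k) // ¬ IsUnit a} :=
    Equiv.subtypeProdEquivProd (p := fun a : ZMod (p ^ k) => ¬ IsUnit a)
      (q := fun a : ZMod (p ^ k) => ¬ IsUnit a)
  have h2 : Nat.card {x : ZMod (p ^ k) × ZMod (p ^ k) // ¬ IsUnit x.1 ∧ ¬ IsUnit x.2}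
      = (p ^ (k - 1)) ^ 2 := by
    rw [Nat.card_congr e2, Nat.card_prod, card_nonunits_zmod_pp hp hk, sq]
  have h3 : cpairs (p ^ k) = (p ^ k) ^ 2 -
      Nat.card {x : ZMod (p ^ k) × ZMod (p ^ k) // ¬ IsUnit x.1 ∧ ¬ IsUnit x.2} := by
    rw [cpairs, Nat.card_congr e1, Nat.card_eq_fintype_card, Nat.card_eq_fintype_card,
      Fintype.card_subtype_compl, Fintype.card_prod, ZMod.card, sq]
  rw [h3, h2]
  have hle : p ^ (k - 1) ≤ p ^ k := Nat.pow_le_pow_right hp.pos (by omega)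
  have : (p ^ (k - 1)) ^ 2 ≤ (p ^ k) ^ 2 := Nat.pow_le_pow_left hle 2
  omega

lemma cpairs_eq (n : ℕ) (hn : n ≠ 0) :
    (cpairs n : ℚ) = (n : ℚ) ^ 2 * ∏ p ∈ n.primeFactors, (1 - ((p : ℚ)⁻¹) ^ 2) := by
  induction n using Nat.recOnPosPrimePosCoprime with
  | prime_pow p k hp hk =>
    obtain ⟨j, rfl⟩ : ∃ j, k = j + 1 := ⟨k - 1, by omega⟩
    have hp' : p.Prime := hp
    have h := cpairs_prime_pow hp' (k := j + 1) (by omega)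
    have hcast : (cpairs (p ^ (j + 1)) : ℚ) = ((p : ℚ) ^ (j + 1)) ^ 2 - ((p : ℚ) ^ j) ^ 2 := by
      have := congrArg (fun x : ℕ => (x : ℚ)) h
      push_cast at this
      linarith
    rw [hcast, Nat.primeFactors_prime_pow (by omega) hp, Finset.prod_singleton]
    have hp0 : (p : ℚ) ≠ 0 := by
      exact_mod_cast hp'.pos.ne'
    field_simp
    push_cast
    ring
  | zero => simp at hn
  | one =>
    have h1 : cpairs 1 = 1 := by
      rw [cpairs]
      have : Nonempty {x : ZMod 1 × ZMod 1 // IsCoprime x.1 x.2} :=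
        ⟨⟨(0, 0), ⟨0, 0, Subsingleton.elim _ _⟩⟩⟩
      exact Nat.card_eq_one_iff_unique.mpr ⟨inferInstance, this⟩
    simp [h1]
  | coprime a b ha hb hab iha ihb =>
    rw [cpairs_mul hab, hab.primeFactors_mul,
      Finset.prod_union hab.disjoint_primeFactors]
    push_cast
    rw [iha (by omega), ihb (by omega)]
    ring

lemma ncard_image_mul_of_fiber {α β : Type*} {S : Set α} (hS : S.Finite) (f : α → β) (k : ℕ)
    (hfib : ∀ v ∈ S, {w | w ∈ S ∧ f w = f v}.ncard = k) :
    (f '' S).ncard * k = S.ncard := by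
  classical
  set T := hS.toFinset with hT
  have himg : (f '' S).ncard = (T.image f).card := by
    rw [← Set.ncard_coe_finset]
    congr 1
    simp [hT]
  have hmaps : ∀ w ∈ T, f w ∈ T.image f := fun w hw => Finset.mem_image_of_mem f hw
  have hsum := Finset.card_eq_sum_card_fiberwise hmaps
  have hfib' : ∀ b ∈ T.image f, (T.filter fun w => f w = b).card = k := by
    intro b hb
    obtain ⟨v, hv, rfl⟩ := Finset.mem_image.1 hb
    have hv' : v ∈ S := hS.mem_toFinset.1 hv
    have hfin : {w | w ∈ S ∧ f w = f v}.Finite := hS.subset fun w hw => hw.1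
    rw [← hfib v hv', Set.ncard_eq_toFinset_card _ hfin]
    congr 1
    ext w
    simp [hT]
  rw [himg, Set.ncard_eq_toFinset_card _ hS, ← hT, hsum,
    Finset.sum_congr rfl hfib', Finset.sum_const, smul_eq_mul, mul_comm]

/-- For every integer `t ≥ 2`, the number of orbits of the scalar
multiplication action of `(ℤ/tℤ)ˣ` on the set of primitive vectors `(a,b,c,d) ∈ (ℤ/tℤ)⁴`
with `a = c = 0` or `b = d = 0` equals `2t · ∏_{p ∣ t prime} (1 + p⁻¹)`. -/
theorem card_orbits_primitive_vectors_vanishing (t : ℕ) (ht : 2 ≤ t) :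
    ((Set.ncard {s : Set (Fin 4 → ZMod t) |
        ∃ v : Fin 4 → ZMod t, IsPrimitiveVec v ∧
          ((v 0 = 0 ∧ v 2 = 0) ∨ (v 1 = 0 ∧ v 3 = 0)) ∧
          s = MulAction.orbit (ZMod t)ˣ v} : ℚ)) =
      2 * (t : ℚ) * ∏ p ∈ t.primeFactors, (1 + (p : ℚ)⁻¹) := by
  classical
  haveI : NeZero t := ⟨by omega⟩
  haveI : Fact (1 < t) := ⟨by omega⟩
  set f : (Fin 4 → ZMod t) → Set (Fin 4 → ZMod t) :=
    fun v => MulAction.orbit (ZMod t)ˣ v with hf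
  set S : Set (Fin 4 → ZMod t) :=
    {v | IsPrimitiveVec v ∧ ((v 0 = 0 ∧ v 2 = 0) ∨ (v 1 = 0 ∧ v 3 = 0))} with hSdef
  have hOset : {s : Set (Fin 4 → ZMod t) |
      ∃ v : Fin 4 → ZMod t, IsPrimitiveVec v ∧
        ((v 0 = 0 ∧ v 2 = 0) ∨ (v 1 = 0 ∧ v 3 = 0)) ∧
        s = MulAction.orbit (ZMod t)ˣ v} = f '' S := by
    ext s
    simp only [Set.mem_setOf_eq, Set.mem_image, hSdef, hf]
    constructor
    · rintro ⟨v, h1, h2, h3⟩; exact ⟨v, ⟨h1, h2⟩, h3.symm⟩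
    · rintro ⟨v, ⟨h1, h2⟩, h3⟩; exact ⟨v, h1, h2, h3.symm⟩
  -- primitivity is preserved by the action
  have hprim_smul : ∀ (u : (ZMod t)ˣ) (v : Fin 4 → ZMod t),
      IsPrimitiveVec v → IsPrimitiveVec (u • v) := by
    intro u v hv
    rw [isPrimitiveVec_iff] at hv ⊢
    obtain ⟨c, hc⟩ := hv
    refine ⟨fun i => c i * (u⁻¹ : (ZMod t)ˣ), ?_⟩
    have : ∀ i, c i * (u⁻¹ : (ZMod t)ˣ) * (u • v) i = c i * v i := by
      intro i
      have h : (u • v) i = (u : ZMod t) * v i := rfl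
      have hui : ((u⁻¹ : (ZMod t)ˣ) : ZMod t) * (u : ZMod t) = 1 := u.inv_mul
      calc c i * (u⁻¹ : (ZMod t)ˣ) * (u • v) i
          = c i * (((u⁻¹ : (ZMod t)ˣ) : ZMod t) * (u : ZMod t)) * v i := by rw [h]; ring
        _ = c i * v i := by rw [hui]; ring
    rw [Finset.sum_congr rfl fun i _ => this i, hc]
  -- freeness
  have hfree : ∀ (u₁ u₂ : (ZMod t)ˣ) (v : Fin 4 → ZMod t),
      IsPrimitiveVec v → u₁ • v = u₂ • v → u₁ = u₂ := by
    intro u₁ u₂ v hv he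
    rw [isPrimitiveVec_iff] at hv
    obtain ⟨c, hc⟩ := hv
    have h1 : ∀ i, (u₁ : ZMod t) * v i = (u₂ : ZMod t) * v i := by
      intro i
      have := congrFun he i
      exact this
    have h2 : (u₁ : ZMod t) = (u₂ : ZMod t) := by
      calc (u₁ : ZMod t) = (u₁ : ZMod t) * ∑ i, c i * v i := by rw [hc, mul_one]
        _ = ∑ i, c i * ((u₁ : ZMod t) * v i) := by rw [Finset.mul_sum]; congr 1; ext i; ring
        _ = ∑ i, c i * ((u₂ : ZMod t) * v i) := by
            exact Finset.sum_congr rfl fun i _ => by rw [h1 i]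
        _ = (u₂ : ZMod t) * ∑ i, c i * v i := by rw [Finset.mul_sum]; congr 1; ext i; ring
        _ = (u₂ : ZMod t) := by rw [hc, mul_one]
    exact Units.ext h2
  -- fibers are orbits
  have hfiber : ∀ v ∈ S, {w | w ∈ S ∧ f w = f v} = MulAction.orbit (ZMod t)ˣ v := by
    intro v hv
    ext w
    constructor
    · rintro ⟨hwS, hfw⟩
      have : w ∈ MulAction.orbit (ZMod t)ˣ w := MulAction.mem_orbit_self w
      have hfw' : MulAction.orbit (ZMod t)ˣ w = MulAction.orbit (ZMod t)ˣ v := hfw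
      exact hfw' ▸ this
    · rintro ⟨u, rfl⟩
      obtain ⟨hv1, hv2⟩ := hv
      refine ⟨⟨hprim_smul u v hv1, ?_⟩, ?_⟩
      · have hsm : ∀ i, (u • v) i = (u : ZMod t) * v i := fun i => rfl
        rcases hv2 with ⟨h0, h2⟩ | ⟨h1, h3⟩
        · exact Or.inl ⟨by show (u : ZMod t) * v 0 = 0; rw [h0, mul_zero],
            by show (u : ZMod t) * v 2 = 0; rw [h2, mul_zero]⟩
        · exact Or.inr ⟨by show (u : ZMod t) * v 1 = 0; rw [h1, mul_zero],
            by show (u : ZMod t) * v 3 = 0; rw [h3, mul_zero]⟩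
      · exact MulAction.orbit_smul u v
  -- orbit size
  have horbit_card : ∀ v ∈ S, (MulAction.orbit (ZMod t)ˣ v).ncard = Nat.totient t := by
    intro v hv
    have hinj : Function.Injective (fun u : (ZMod t)ˣ => u • v) := by
      intro u₁ u₂ h
      exact hfree u₁ u₂ v hv.1 h
    have : MulAction.orbit (ZMod t)ˣ v = (fun u : (ZMod t)ˣ => u • v) '' Set.univ := by
      rw [Set.image_univ]
      rfl
    rw [this, Set.ncard_image_of_injective _ hinj, Set.ncard_univ,
      Nat.card_eq_fintype_card, ZMod.card_units_eq_totient]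
  -- the key counting identity
  have hS_fin : S.Finite := Set.toFinite S
  have hcount : (f '' S).ncard * Nat.totient t = S.ncard := by
    apply ncard_image_mul_of_fiber hS_fin f (Nat.totient t)
    intro v hv
    rw [hfiber v hv]
    exact horbit_card v hv
  -- decompose S
  set C : Set (ZMod t × ZMod t) := {x | IsCoprime x.1 x.2} with hC
  set gA : ZMod t × ZMod t → (Fin 4 → ZMod t) := fun x => ![0, x.1, 0, x.2] with hgA
  set gB : ZMod t × ZMod t → (Fin 4 → ZMod t) := fun x => ![x.1, 0, x.2, 0] with hgB
  have hSAB : S = gA '' C ∪ gB '' C := by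
    ext v
    simp only [Set.mem_union, Set.mem_image, hSdef, Set.mem_setOf_eq, hC, hgA, hgB]
    constructor
    · rintro ⟨hprim, hzero⟩
      rw [isPrimitiveVec_iff] at hprim
      obtain ⟨c, hc⟩ := hprim
      rw [Fin.sum_univ_four] at hc
      rcases hzero with ⟨h0, h2⟩ | ⟨h1, h3⟩
      · left
        refine ⟨(v 1, v 3), ⟨c 1, c 3, ?_⟩, ?_⟩
        · rw [h0, h2] at hc; simpa using hc
        · funext i; fin_cases i <;> simp [h0, h2]
      · right
        refine ⟨(v 0, v 2), ⟨c 0, c 2, ?_⟩, ?_⟩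
        · rw [h1, h3] at hc; simpa using hc
        · funext i; fin_cases i <;> simp [h1, h3]
    · rintro (⟨x, ⟨a, b, hab⟩, rfl⟩ | ⟨x, ⟨a, b, hab⟩, rfl⟩)
      · refine ⟨?_, Or.inl ⟨rfl, rfl⟩⟩
        rw [isPrimitiveVec_iff]
        exact ⟨![0, a, 0, b], by rw [Fin.sum_univ_four]; simpa using hab⟩
      · refine ⟨?_, Or.inr ⟨rfl, rfl⟩⟩
        rw [isPrimitiveVec_iff]
        exact ⟨![a, 0, b, 0], by rw [Fin.sum_univ_four]; simpa using hab⟩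
  have hgA_inj : Function.Injective gA := by
    intro x y h
    have h1 := congrFun h 1
    have h3 := congrFun h 3
    simp [hgA] at h1 h3
    exact Prod.ext h1 h3
  have hgB_inj : Function.Injective gB := by
    intro x y h
    have h1 := congrFun h 0
    have h3 := congrFun h 2
    simp [hgB] at h1 h3
    exact Prod.ext h1 h3
  have hdisj : Disjoint (gA '' C) (gB '' C) := by
    rw [Set.disjoint_left]
    rintro v ⟨x, hx, rfl⟩ ⟨y, ⟨a, b, hab⟩, hy⟩
    -- gA x = gB y means x.1 = 0 at coordinate 1 etc.
    have h0 := congrFun hy 0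
    have h1 := congrFun hy 1
    simp [hgA, hgB] at h0 h1
    -- then y.1 = 0 and contradiction with coprimality? x.1 = 0 from h1
    obtain ⟨u, w, huw⟩ := hx
    have hx1 : x.1 = 0 := h1.symm
    have hy1 : y.1 = 0 := h0
    -- also coordinates 2,3
    have h2 := congrFun hy 2
    have h3 := congrFun hy 3
    simp [hgA, hgB] at h2 h3
    have hx2 : x.2 = 0 := h3.symm
    rw [hx1, hx2] at huw
    simp at huw
  have hcard_S : S.ncard = 2 * cpairs t := by
    rw [hSAB, Set.ncard_union_eq hdisj (Set.toFinite _) (Set.toFinite _),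
      Set.ncard_image_of_injective _ hgA_inj, Set.ncard_image_of_injective _ hgB_inj]
    have : C.ncard = cpairs t := rfl
    omega
  -- put everything together over ℚ
  have htot : (0 : ℚ) < Nat.totient t := by
    exact_mod_cast Nat.totient_pos.mpr (by omega)
  have hcastcount : ((f '' S).ncard : ℚ) * (Nat.totient t : ℚ) = 2 * (cpairs t : ℚ) := by
    have h12 : (f '' S).ncard * Nat.totient t = 2 * cpairs t := hcount.trans hcard_S
    exact_mod_cast congrArg (fun x : ℕ => (x : ℚ)) h12
  have hsplit : ∏ p ∈ t.primeFactors, (1 - ((p : ℚ)⁻¹) ^ 2) =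
      (∏ p ∈ t.primeFactors, (1 - (p : ℚ)⁻¹)) * ∏ p ∈ t.primeFactors, (1 + (p : ℚ)⁻¹) := by
    rw [← Finset.prod_mul_distrib]
    exact Finset.prod_congr rfl fun p _ => by ring
  have htotformula : (Nat.totient t : ℚ) = t * ∏ p ∈ t.primeFactors, (1 - (p : ℚ)⁻¹) :=
    Nat.totient_eq_mul_prod_factors t
  rw [hOset]
  apply mul_right_cancel₀ (ne_of_gt htot)
  rw [hcastcount, cpairs_eq t (by omega), hsplit, htotformula]
  ring
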